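/- Consider the left-invariant error system on SE(2) with state space ℝ³ = so(2) ⊕ ℝ² (heading error δθ ∈ ℝ followed by position error δp ∈ ℝ²), with one-step transition matrices Φ(t+1,t) = [[1, 0],[b_t, A_t]] where A_t ∈ SO(2) and b_t ∈ ℝ². Define the accumulated coupling vectors by c_0 = 0 and c_{t+1} = A_t c_t + b_t, so that Φ(t,0) = [[1, 0],[c_t, A_{t-1}⋯A_0]]. Let the only sensor be a position measurement H = [0 I₂] with noise covariance R ≻ 0, and let W_o(T) be the corresponding observability Gramian. Then for every horizon T ≥ 1, the heading direction e₁ = (1, 0, 0) lies in the kernel of W_o(T) if and only if c_t = 0 for all 0 ≤ t ≤ T−1. In particular, position-only sensing renders the heading observable over the horizon T if and only if the dynamics produce a nonzero accumulated coupling c_t for some t < T. -/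

import Mathlib

/-- Ordered product `f (b-1) * ⋯ * f a` (and `1` when `b ≤ a`). -/
def matProdRange {α : Type*} [Monoid α] (f : ℕ → α) (a b : ℕ) : α :=
  (((List.range' a (b - a)).reverse).map f).prod

lemma matProdRange_zero {α : Type*} [Monoid α] (f : ℕ → α) : matProdRange f 0 0 = 1 := rfl

lemma matProdRange_succ {α : Type*} [Monoid α] (f : ℕ → α) (t : ℕ) :
    matProdRange f 0 (t + 1) = f t * matProdRange f 0 t := by
  simp [matProdRange, List.range'_concat]

lemma sum_mulVec' {ι n m : Type*} [Fintype m] [DecidableEq ι] (s : Finset ι)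
    (M : ι → Matrix n m ℝ) (v : m → ℝ) :
    (∑ t ∈ s, M t).mulVec v = ∑ t ∈ s, (M t).mulVec v := by
  ext i
  simp [Matrix.mulVec, dotProduct, Matrix.sum_apply, Finset.sum_mul]
  rw [Finset.sum_comm]

lemma dotProduct_sum' {ι n : Type*} [Fintype n] [DecidableEq ι] (s : Finset ι)
    (v : n → ℝ) (w : ι → n → ℝ) :
    dotProduct v (∑ t ∈ s, w t) = ∑ t ∈ s, dotProduct v (w t) := by
  simp [dotProduct, Finset.sum_apply, Finset.mul_sum]
  rw [Finset.sum_comm]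

/- STATEMENT 16 (SE(2): heading observable from position iff nonzero accumulated
coupling). State space ℝ³ = so(2) ⊕ ℝ² (indexed Fin 1 ⊕ Fin 2). One-step
transitions Φ(t+1,t) = [[1, 0],[b_t, A_t]] with A_t ∈ SO(2), b_t ∈ ℝ².
Accumulated coupling c_0 = 0, c_{t+1} = A_t c_t + b_t, so that
Φ(t,0) = [[1, 0],[c_t, A_{t-1}⋯A_0]]. Position sensor H = [0 I₂] with noise
covariance Rn ≻ 0. Then for every T ≥ 1 the heading direction e₁ = (1,0,0)
lies in ker W_o(T) iff c_t = 0 for all 0 ≤ t ≤ T−1. -/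
open Matrix Finset in
theorem se2_heading_kernel_iff_coupling_zero
    (A : ℕ → Matrix (Fin 2) (Fin 2) ℝ)
    (hAOrtho : ∀ t, (A t)ᵀ * A t = 1)
    (hADet : ∀ t, (A t).det = 1)
    (b : ℕ → Fin 2 → ℝ)
    (Phi : ℕ → Matrix (Fin 1 ⊕ Fin 2) (Fin 1 ⊕ Fin 2) ℝ)
    (hPhi0 : Phi 0 = 1)
    (hPhiSucc : ∀ t, Phi (t + 1) =
      Matrix.fromBlocks 1 0 (Matrix.of fun r (_ : Fin 1) => b t r) (A t) * Phi t)
    (c : ℕ → Fin 2 → ℝ)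
    (hc0 : c 0 = 0)
    (hcSucc : ∀ t, c (t + 1) = (A t).mulVec (c t) + b t)
    (H : Matrix (Fin 2) (Fin 1 ⊕ Fin 2) ℝ)
    (hH : H = Matrix.fromCols 0 1)
    (Rn : Matrix (Fin 2) (Fin 2) ℝ) (hRn : Rn.PosDef)
    (W : ℕ → Matrix (Fin 1 ⊕ Fin 2) (Fin 1 ⊕ Fin 2) ℝ)
    (hW : ∀ T, W T = ∑ t ∈ Finset.range T, (Phi t)ᵀ * Hᵀ * Rn⁻¹ * H * Phi t) :
    (∀ t, Phi t =
      Matrix.fromBlocks 1 0 (Matrix.of fun r (_ : Fin 1) => c t r) (matProdRange A 0 t)) ∧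
    ∀ T, 1 ≤ T →
      ((W T).mulVec (Sum.elim 1 0) = 0 ↔ ∀ t < T, c t = 0) := by
  have hPhi : ∀ t, Phi t =
      Matrix.fromBlocks 1 0 (Matrix.of fun r (_ : Fin 1) => c t r) (matProdRange A 0 t) := by
    intro t
    induction t with
    | zero =>
      rw [hPhi0, matProdRange_zero, hc0]
      rw [show (Matrix.of fun r (_ : Fin 1) => (0 : Fin 2 → ℝ) r) =
        (0 : Matrix (Fin 2) (Fin 1) ℝ) from rfl, Matrix.fromBlocks_one]
    | succ t ih =>
      rw [hPhiSucc t, ih, Matrix.fromBlocks_multiply, matProdRange_succ]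
      have h21 : (Matrix.of fun r (_ : Fin 1) => b t r)
          + A t * (Matrix.of fun r (_ : Fin 1) => c t r)
          = Matrix.of fun r (_ : Fin 1) => c (t + 1) r := by
        ext i j
        simp [Matrix.mul_one, Matrix.mul_apply, hcSucc, Matrix.mulVec, dotProduct,
          Fin.sum_univ_two, add_comm]
        fin_cases i <;> simp
      simp only [Matrix.one_mul, Matrix.mul_one, Matrix.zero_mul, Matrix.mul_zero,
        add_zero, zero_add, h21]
  refine ⟨hPhi, fun T hT => ?_⟩
  set e : (Fin 1 ⊕ Fin 2) → ℝ := Sum.elim 1 0 with he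
  -- key: (H * Phi t) *ᵥ e = c t
  have hkey : ∀ t, (H * Phi t).mulVec e = c t := by
    intro t
    rw [← Matrix.mulVec_mulVec, hPhi t, he, Matrix.fromBlocks_mulVec, hH]
    have h1 : (Matrix.of fun r (_ : Fin 1) => c t r).mulVec (1 : Fin 1 → ℝ) = c t := by
      ext i; simp [Matrix.mulVec, dotProduct]
    simp [h1, Matrix.fromCols_mulVec_sumElim]
  have hterm : ∀ t, ((Phi t)ᵀ * Hᵀ * Rn⁻¹ * H * Phi t).mulVec e
      = ((H * Phi t)ᵀ).mulVec (Rn⁻¹.mulVec (c t)) := by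
    intro t
    rw [← hkey t, Matrix.transpose_mul, Matrix.mulVec_mulVec, Matrix.mulVec_mulVec]
    rw [Matrix.mul_assoc, Matrix.mul_assoc]
  constructor
  · intro hWe t htT
    -- quadratic form is zero
    have hq : dotProduct e ((W T).mulVec e) = 0 := by rw [hWe]; simp
    rw [hW T, sum_mulVec', dotProduct_sum'] at hq
    have hterm2 : ∀ s, dotProduct e (((Phi s)ᵀ * Hᵀ * Rn⁻¹ * H * Phi s).mulVec e)
        = dotProduct (c s) (Rn⁻¹.mulVec (c s)) := by
      intro s
      rw [hterm s, dotProduct_mulVec, Matrix.vecMul_transpose, hkey s]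
    have hnonneg : ∀ s ∈ Finset.range T,
        0 ≤ dotProduct e (((Phi s)ᵀ * Hᵀ * Rn⁻¹ * H * Phi s).mulVec e) := by
      intro s _
      rw [hterm2 s]
      have := hRn.inv.posSemidef.dotProduct_mulVec_nonneg (c s)
      simpa using this
    have hzero := (Finset.sum_eq_zero_iff_of_nonneg hnonneg).mp hq t (Finset.mem_range.mpr htT)
    rw [hterm2 t] at hzero
    by_contra hne
    have := hRn.inv.dotProduct_mulVec_pos hne
    simp only [star_trivial] at this
    rw [hzero] at this
    exact lt_irrefl 0 this
  · intro hc
    rw [hW T, sum_mulVec']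
    refine Finset.sum_eq_zero fun t ht => ?_
    rw [hterm t, hc t (Finset.mem_range.mp ht)]
    simp
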